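/- Let k ≠ 0 and let z be a differentiable function with 1 - 2kz(x) ≠ 0. If z satisfies the linear equation z' = Q(x)/(2k) + (Q(x) - 2k P(x)) z, then y(x) = (1 + 2k z(x)) / (k (1 - 2k z(x))) satisfies the Riccati equation y' = P(x) + Q(x) y + k(Q(x) - k P(x)) y². -/

import Mathlib

/-- If z solves the linear equation z' = Q/(2k) + (Q - 2kP) z with
1 - 2kz ≠ 0, then y = (1 + 2kz)/(k(1 - 2kz)) solves y' = P + Q y + k(Q - kP) y². -/
theorem riccati_linearization
    (I : Set ℝ) (P Q z : ℝ → ℝ) (k : ℝ) (hk : k ≠ 0)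
    (hz : ∀ x ∈ I, HasDerivAt z (Q x / (2 * k) + (Q x - 2 * k * P x) * z x) x)
    (hnz : ∀ x ∈ I, 1 - 2 * k * z x ≠ 0)
    (y : ℝ → ℝ) (hy : y = fun x => (1 + 2 * k * z x) / (k * (1 - 2 * k * z x))) :
    ∀ x ∈ I, HasDerivAt y (P x + Q x * y x + k * (Q x - k * P x) * (y x) ^ 2) x := by
  intro x hx
  subst hy
  have hz' := hz x hx
  have hn := hnz x hx
  set z' := Q x / (2 * k) + (Q x - 2 * k * P x) * z x with hz'def
  have hu : HasDerivAt (fun t => 1 + 2 * k * z t) (2 * k * z') x := by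
    simpa using ((hz'.const_mul (2 * k)).const_add 1)
  have hv : HasDerivAt (fun t => k * (1 - 2 * k * z t)) (k * (-(2 * k * z'))) x := by
    exact (((hz'.const_mul (2 * k)).const_sub 1).const_mul k)
  have hv0 : k * (1 - 2 * k * z x) ≠ 0 := mul_ne_zero hk hn
  have := hu.div hv hv0
  refine HasDerivAt.congr_deriv this ?_
  rw [hz'def]
  field_simp
  ring
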